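/- Let A be a d×d symmetric positive definite matrix with smallest eigenvalue Λ_min(A) ≥ m > 0 and A_{ii} ≤ M for all i. Define the diagonal matrix D by D_{ii} = 1/A_{ii} and Σ = A^{-1}. Then det(Σ)·det(D^{-1}) ≤ (M/m)^d, and consequently KL( N(μ, D) ‖ N(μ, Σ) ) ≤ (d/2) log(M/m) for any μ ∈ ℝ^d. -/

import Mathlib

open MeasureTheory Matrix Real

/-- Kullback-Leibler divergence `KL(Q‖P) = ∫ log (dQ/dP) dQ`. -/
noncomputable def klDiv {α : Type*} [MeasurableSpace α] (Q P : Measure α) : ℝ :=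
  ∫ x, Real.log ((Q.rnDeriv P x).toReal) ∂Q

/-- Density of the `N(μ, V)` distribution on `ℝ^d`. -/
noncomputable def gaussDensity {d : ℕ} (μ : Fin d → ℝ) (V : Matrix (Fin d) (Fin d) ℝ)
    (x : Fin d → ℝ) : ℝ :=
  (Real.sqrt ((2 * π) ^ d * V.det))⁻¹ *
    Real.exp (-(1 / 2) * ((x - μ) ⬝ᵥ V⁻¹.mulVec (x - μ)))

/-- The multivariate Gaussian measure `N(μ, V)` on `ℝ^d`. -/
noncomputable def gaussMeasure {d : ℕ} (μ : Fin d → ℝ) (V : Matrix (Fin d) (Fin d) ℝ) :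
    Measure (Fin d → ℝ) :=
  volume.withDensity fun x => ENNReal.ofReal (gaussDensity μ V x)

section Aux

open ProbabilityTheory

/-- 1-dimensional gaussian density with mean `c` and precision `aa` (variance `aa⁻¹`). -/
noncomputable def psi (c aa t : ℝ) : ℝ :=
  (Real.sqrt (2 * π * aa⁻¹))⁻¹ * Real.exp (-(1 / 2) * (aa * (t - c) ^ 2))

lemma psi_eq_gaussianPDFReal (c : ℝ) {aa : ℝ} (ha : 0 < aa) :
    psi c aa = gaussianPDFReal c (⟨aa, ha.le⟩ : NNReal)⁻¹ := by
  funext t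
  have hco : (((⟨aa, ha.le⟩ : NNReal)⁻¹ : NNReal) : ℝ) = aa⁻¹ := by
    exact NNReal.coe_inv _
  rw [gaussianPDFReal, hco, psi]
  congr 1
  rw [div_eq_mul_inv]
  congr 1
  field_simp

lemma psi_integrable (c : ℝ) {aa : ℝ} (ha : 0 < aa) : Integrable (psi c aa) := by
  rw [psi_eq_gaussianPDFReal c ha]
  exact integrable_gaussianPDFReal _ _

lemma psi_integral_one (c : ℝ) {aa : ℝ} (ha : 0 < aa) : ∫ t, psi c aa t = 1 := by
  rw [psi_eq_gaussianPDFReal c ha]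
  refine integral_gaussianPDFReal_eq_one c (inv_ne_zero ?_)
  intro hcon
  exact ha.ne' (congrArg NNReal.toReal hcon)

lemma psi_nonneg (c : ℝ) (aa t : ℝ) : 0 ≤ psi c aa t :=
  mul_nonneg (inv_nonneg.2 (Real.sqrt_nonneg _)) (Real.exp_pos _).le

lemma poly_gauss_integrable (c : ℝ) {aa : ℝ} (ha : 0 < aa) (n : ℕ) :
    Integrable (fun t => (t - c) ^ n * psi c aa t) := by
  have h0 : Integrable (fun x : ℝ => x ^ n * Real.exp (-(aa / 2) * x ^ 2)) := by
    have := integrable_rpow_mul_exp_neg_mul_sq (half_pos ha) (s := (n : ℝ))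
      (lt_of_lt_of_le neg_one_lt_zero (Nat.cast_nonneg n))
    simpa [Real.rpow_natCast] using this
  have h1 : Integrable (fun x : ℝ =>
      x ^ n * ((Real.sqrt (2 * π * aa⁻¹))⁻¹ * Real.exp (-(1 / 2) * (aa * x ^ 2)))) := by
    have heq : (fun x : ℝ =>
        x ^ n * ((Real.sqrt (2 * π * aa⁻¹))⁻¹ * Real.exp (-(1 / 2) * (aa * x ^ 2)))) =
        fun x : ℝ => (Real.sqrt (2 * π * aa⁻¹))⁻¹ * (x ^ n * Real.exp (-(aa / 2) * x ^ 2)) := by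
      funext x
      rw [show -(1 / 2 : ℝ) * (aa * x ^ 2) = -(aa / 2) * x ^ 2 by ring]
      ring
    rw [heq]
    exact h0.const_mul _
  have := h1.comp_sub_right c
  exact this

lemma gauss_first_moment (c : ℝ) {aa : ℝ} (ha : 0 < aa) :
    ∫ t, (t - c) * psi c aa t = 0 := by
  have hfun : (fun t : ℝ => (t - c) * psi c aa t) =
      fun t => (fun x : ℝ =>
        x * ((Real.sqrt (2 * π * aa⁻¹))⁻¹ * Real.exp (-(1 / 2) * (aa * x ^ 2)))) (t - c) := by
    funext t
    simp [psi]
  set g : ℝ → ℝ := fun x =>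
    x * ((Real.sqrt (2 * π * aa⁻¹))⁻¹ * Real.exp (-(1 / 2) * (aa * x ^ 2))) with hg
  have hodd : ∀ x, g (-x) = -g x := by
    intro x
    simp only [hg, neg_sq]
    ring
  have h1 : ∫ x, g x = 0 := by
    have h2 : ∫ x, g x = ∫ x, g (-x) := (integral_neg_eq_self g volume).symm
    have h3 : ∫ x, g (-x) = -∫ x, g x := by
      simp_rw [hodd]
      exact integral_neg g
    linarith [h2, h3]
  rw [hfun]
  rw [integral_sub_right_eq_self
    (fun x : ℝ => x * ((Real.sqrt (2 * π * aa⁻¹))⁻¹ * Real.exp (-(1 / 2) * (aa * x ^ 2)))) c]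
  exact h1

lemma sqrt_prod {ι : Type*} (s : Finset ι) (f : ι → ℝ) (h : ∀ i ∈ s, 0 ≤ f i) :
    Real.sqrt (∏ i ∈ s, f i) = ∏ i ∈ s, Real.sqrt (f i) := by
  classical
  induction s using Finset.cons_induction with
  | empty => simp
  | cons i s his ih =>
    rw [Finset.prod_cons, Finset.prod_cons, Real.sqrt_mul (h i (Finset.mem_cons_self i s)),
      ih fun j hj => h j (Finset.mem_cons_of_mem hj)]

end Aux

section Main

open ProbabilityTheory

variable {d : ℕ}

lemma gaussDensity_measurable (μ : Fin d → ℝ) (V : Matrix (Fin d) (Fin d) ℝ) :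
    Measurable (gaussDensity μ V) := by
  have hq : Measurable fun x : Fin d → ℝ => (x - μ) ⬝ᵥ V⁻¹.mulVec (x - μ) := by
    simp only [dotProduct, Matrix.mulVec, Pi.sub_apply]
    exact Finset.measurable_sum _ fun i _ =>
      (((measurable_pi_apply i).sub measurable_const).mul
        (Finset.measurable_sum _ fun j _ =>
          measurable_const.mul ((measurable_pi_apply j).sub measurable_const)))
  exact ((hq.const_mul (-(1 / 2))).exp).const_mul _

lemma diag_pos {A : Matrix (Fin d) (Fin d) ℝ} (hA : A.PosDef) : ∀ i, 0 < A i i := by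
  intro i
  exact hA.diag_pos

/-- The main KL computation: `KL(N(μ,D) ‖ N(μ,Σ)) = (1/2) log (det Σ · det D⁻¹)`. -/
theorem klDiv_gauss_eq (μ : Fin d → ℝ) (A : Matrix (Fin d) (Fin d) ℝ) (hA : A.PosDef) :
    klDiv (gaussMeasure μ (Matrix.diagonal fun i => (A i i)⁻¹)) (gaussMeasure μ A⁻¹)
      = (1 / 2) * Real.log (A⁻¹.det * ∏ i, A i i) := by
  classical
  have ha : ∀ i, 0 < A i i := diag_pos hA
  set D : Matrix (Fin d) (Fin d) ℝ := Matrix.diagonal fun i => (A i i)⁻¹ with hD_def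
  have hDinv : D⁻¹ = Matrix.diagonal fun i => A i i := by
    apply Matrix.inv_eq_right_inv
    rw [hD_def, Matrix.diagonal_mul_diagonal]
    convert Matrix.diagonal_one with i
    exact inv_mul_cancel₀ (ha i).ne'
  have hAinv : (A⁻¹)⁻¹ = A :=
    Matrix.nonsing_inv_nonsing_inv A (isUnit_iff_ne_zero.mpr hA.det_pos.ne')
  have hprodpos : 0 < ∏ i, A i i := Finset.prod_pos fun i _ => ha i
  have hdetD : D.det = (∏ i, A i i)⁻¹ := by
    rw [hD_def, Matrix.det_diagonal, Finset.prod_inv_distrib]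
  have hdetS : 0 < (A⁻¹).det := hA.inv.det_pos
  set q : (Fin d → ℝ) → ℝ := gaussDensity μ D with hq_def
  set p : (Fin d → ℝ) → ℝ := gaussDensity μ A⁻¹ with hp_def
  -- product representation of q
  have q_prod : ∀ x, q x = ∏ i, psi (μ i) (A i i) (x i) := by
    intro x
    rw [hq_def, gaussDensity, hDinv, hdetD]
    have hconst : ((2 * π) ^ d * (∏ i, A i i)⁻¹) = ∏ i : Fin d, (2 * π * (A i i)⁻¹) := by
      rw [Finset.prod_mul_distrib, Finset.prod_const, Finset.card_univ, Fintype.card_fin,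
        ← Finset.prod_inv_distrib]
    have hquad : (x - μ) ⬝ᵥ (Matrix.diagonal fun i => A i i).mulVec (x - μ) =
        ∑ i, (A i i * (x i - μ i) ^ 2) := by
      simp only [dotProduct, Matrix.mulVec_diagonal, Pi.sub_apply]
      exact Finset.sum_congr rfl fun i _ => by ring
    rw [hconst, hquad, Finset.mul_sum, Real.exp_sum,
      sqrt_prod _ _ (fun i _ => le_of_lt (by have := ha i; positivity)),
      ← Finset.prod_inv_distrib, ← Finset.prod_mul_distrib]
    exact Finset.prod_congr rfl fun i _ => by rw [psi]
  have q_pos : ∀ x, 0 < q x := by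
    intro x
    rw [hq_def, gaussDensity]
    have h1 : 0 < (2 * π) ^ d * D.det := by
      rw [hdetD]
      positivity
    exact mul_pos (inv_pos.2 (Real.sqrt_pos.2 h1)) (Real.exp_pos _)
  have p_pos : ∀ x, 0 < p x := by
    intro x
    rw [hp_def, gaussDensity]
    have h1 : 0 < (2 * π) ^ d * (A⁻¹).det := by positivity
    exact mul_pos (inv_pos.2 (Real.sqrt_pos.2 h1)) (Real.exp_pos _)
  have q_meas : Measurable q := gaussDensity_measurable μ D
  have p_meas : Measurable p := gaussDensity_measurable μ A⁻¹
  have q_int : Integrable q := by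
    have : Integrable (fun x : Fin d → ℝ => ∏ i, psi (μ i) (A i i) (x i)) :=
      Integrable.fintype_prod (𝕜 := ℝ) fun i => psi_integrable (μ i) (ha i)
    exact this.congr (Filter.Eventually.of_forall fun x => (q_prod x).symm)
  have q_intone : ∫ x, q x = 1 := by
    rw [show q = fun x => ∏ i, psi (μ i) (A i i) (x i) from funext q_prod,
      integral_fintype_prod_volume_eq_prod (𝕜 := ℝ) (f := fun i t => psi (μ i) (A i i) t)]
    exact Finset.prod_eq_one fun i _ => psi_integral_one (μ i) (ha i)
  -- moments
  have mom_int : ∀ i j, Integrable (fun x : Fin d → ℝ =>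
      (x i - μ i) * ((x j - μ j) * q x)) := by
    intro i j
    set w : Fin d → ℝ → ℝ := fun k t =>
      (if k = i then t - μ k else 1) * ((if k = j then t - μ k else 1) * psi (μ k) (A k k) t)
      with hw_def
    have hw : ∀ x : Fin d → ℝ, (∏ k, w k (x k)) = (x i - μ i) * ((x j - μ j) * q x) := by
      intro x
      rw [q_prod]
      simp only [hw_def]
      rw [Finset.prod_mul_distrib, Finset.prod_mul_distrib, Finset.prod_ite_eq',
        Finset.prod_ite_eq']
      simp
    have hwi : ∀ k, Integrable (w k) := by
      intro k
      by_cases hki : k = i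
      · subst hki
        by_cases hkj : k = j
        · subst hkj
          have h2 := poly_gauss_integrable (μ k) (ha k) 2
          refine h2.congr (Filter.Eventually.of_forall fun t => ?_)
          simp only [hw_def, eq_self_iff_true, if_true]
          ring
        · have h1 := poly_gauss_integrable (μ k) (ha k) 1
          refine h1.congr (Filter.Eventually.of_forall fun t => ?_)
          simp only [hw_def, eq_self_iff_true, if_true, if_neg hkj, one_mul]
          ring
      · by_cases hkj : k = j
        · subst hkj
          have h1 := poly_gauss_integrable (μ k) (ha k) 1
          refine h1.congr (Filter.Eventually.of_forall fun t => ?_)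
          simp only [hw_def, eq_self_iff_true, if_true, if_neg hki, one_mul]
          ring
        · have h0 := psi_integrable (μ k) (ha k)
          refine h0.congr (Filter.Eventually.of_forall fun t => ?_)
          simp only [hw_def, if_neg hki, if_neg hkj, one_mul]
    have := Integrable.fintype_prod (𝕜 := ℝ) hwi
    exact this.congr (Filter.Eventually.of_forall fun x => hw x)
  have mom_zero : ∀ i j, i ≠ j → (∫ x : Fin d → ℝ,
      (x i - μ i) * ((x j - μ j) * q x)) = 0 := by
    intro i j hij
    set w : Fin d → ℝ → ℝ := fun k t =>
      (if k = i then t - μ k else 1) * ((if k = j then t - μ k else 1) * psi (μ k) (A k k) t)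
      with hw_def
    have hw : ∀ x : Fin d → ℝ, (∏ k, w k (x k)) = (x i - μ i) * ((x j - μ j) * q x) := by
      intro x
      rw [q_prod]
      simp only [hw_def]
      rw [Finset.prod_mul_distrib, Finset.prod_mul_distrib, Finset.prod_ite_eq',
        Finset.prod_ite_eq']
      simp
    rw [show (fun x : Fin d → ℝ => (x i - μ i) * ((x j - μ j) * q x)) =
      fun x => ∏ k, w k (x k) from funext fun x => (hw x).symm]
    rw [integral_fintype_prod_volume_eq_prod (𝕜 := ℝ) (f := w)]
    refine Finset.prod_eq_zero (Finset.mem_univ i) ?_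
    have : ∫ t, w i t = ∫ t, (t - μ i) * psi (μ i) (A i i) t := by
      congr 1
      funext t
      simp [hw_def, hij]
    rw [this]
    exact gauss_first_moment (μ i) (ha i)
  -- measure setup
  set Q : Measure (Fin d → ℝ) := gaussMeasure μ D with hQ_def
  set P : Measure (Fin d → ℝ) := gaussMeasure μ A⁻¹ with hP_def
  have hQw : Q = volume.withDensity fun x => ENNReal.ofReal (q x) := rfl
  have hPw : P = volume.withDensity fun x => ENNReal.ofReal (p x) := rfl
  haveI : SigmaFinite P := by
    rw [hPw]; exact SigmaFinite.withDensity_ofReal p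
  set h : (Fin d → ℝ) → ENNReal := fun x => ENNReal.ofReal (q x / p x) with hh_def
  have h_meas : Measurable h := (q_meas.div p_meas).ennreal_ofReal
  have hQP : Q = P.withDensity h := by
    rw [hPw, hQw, ← withDensity_mul volume p_meas.ennreal_ofReal h_meas]
    congr 1
    funext x
    simp only [Pi.mul_apply, hh_def]
    rw [← ENNReal.ofReal_mul (p_pos x).le]
    rw [← mul_div_assoc, mul_comm (p x) (q x), mul_div_assoc, div_self (p_pos x).ne', mul_one]
  have hRN : Q.rnDeriv P =ᶠ[ae Q] h := by
    have h1 : Q.rnDeriv P =ᶠ[ae P] h := by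
      rw [hQP]; exact Measure.rnDeriv_withDensity P h_meas
    have hac : Q ≪ P := by rw [hQP]; exact withDensity_absolutelyContinuous P h
    exact h1.filter_mono hac.ae_le
  -- logarithmic identity
  set r : ℝ := (A⁻¹).det * ∏ i, A i i with hr_def
  have hrpos : 0 < r := mul_pos hdetS hprodpos
  set C : ℝ := (1 / 2) * Real.log r with hC_def
  set S : (Fin d → ℝ) → ℝ := fun x => (x - μ) ⬝ᵥ A.mulVec (x - μ) with hS_def
  set T : (Fin d → ℝ) → ℝ :=
    fun x => (x - μ) ⬝ᵥ (Matrix.diagonal fun i => A i i).mulVec (x - μ) with hT_def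
  have logid : ∀ x, Real.log (q x / p x) = C + ((1 / 2) * S x - (1 / 2) * T x) := by
    intro x
    have hq_eq : q x = (Real.sqrt ((2 * π) ^ d * D.det))⁻¹ * Real.exp (-(1 / 2) * T x) := by
      rw [hq_def, gaussDensity, hDinv]
    have hp_eq : p x = (Real.sqrt ((2 * π) ^ d * (A⁻¹).det))⁻¹ *
        Real.exp (-(1 / 2) * S x) := by
      rw [hp_def, gaussDensity, hAinv]
    have heD : 0 < (2 * π) ^ d * D.det := by rw [hdetD]; positivity
    have heS : 0 < (2 * π) ^ d * (A⁻¹).det := by positivity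
    rw [Real.log_div (q_pos x).ne' (p_pos x).ne', hq_eq, hp_eq,
      Real.log_mul (by positivity) (Real.exp_pos _).ne',
      Real.log_mul (by positivity) (Real.exp_pos _).ne',
      Real.log_exp, Real.log_exp, Real.log_inv, Real.log_inv,
      Real.log_sqrt heD.le, Real.log_sqrt heS.le]
    have hre : ((2 * π) ^ d * (A⁻¹).det) / ((2 * π) ^ d * D.det) = r := by
      rw [hdetD, hr_def]
      have h2pi : ((2 : ℝ) * π) ^ d ≠ 0 := by positivity
      field_simp
    have hlog : Real.log ((2 * π) ^ d * (A⁻¹).det) - Real.log ((2 * π) ^ d * D.det)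
        = Real.log r := by
      rw [← Real.log_div heS.ne' heD.ne', hre]
    rw [hC_def]
    nlinarith [hlog]
  -- rewrite klDiv integrand
  have kl_eq : klDiv Q P = ∫ x, (C + ((1 / 2) * S x - (1 / 2) * T x)) ∂Q := by
    rw [klDiv]
    refine integral_congr_ae ?_
    filter_upwards [hRN] with x hx
    rw [hx, hh_def, ENNReal.toReal_ofReal (div_nonneg (q_pos x).le (p_pos x).le), logid x]
  -- transfer to Lebesgue
  have transfer : ∀ g : (Fin d → ℝ) → ℝ, (∫ x, g x ∂Q) = ∫ x, q x * g x := by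
    intro g
    have hQw' : Q = volume.withDensity fun x => ((q x).toNNReal : ENNReal) := hQw
    rw [hQw', integral_withDensity_eq_integral_smul q_meas.real_toNNReal g]
    congr 1
    funext x
    rw [NNReal.smul_def, Real.coe_toNNReal _ (q_pos x).le, smul_eq_mul]
  rw [kl_eq, transfer]
  -- expand the integrand
  set cc : Fin d → Fin d → ℝ :=
    fun i j => (1 / 2) * (A i j - Matrix.diagonal (fun i => A i i) i j) with hcc_def
  have expand : (fun x => q x * (C + ((1 / 2) * S x - (1 / 2) * T x))) =
      fun x => C * q x + ∑ i, ∑ j, cc i j * ((x i - μ i) * ((x j - μ j) * q x)) := by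
    funext x
    have hS_x : S x = ∑ i, ((x i - μ i) * ∑ j, A i j * (x j - μ j)) := by
      rw [hS_def]
      simp only [dotProduct, Matrix.mulVec, Pi.sub_apply]
    have hT_x : T x = ∑ i, ((x i - μ i) *
        ∑ j, Matrix.diagonal (fun i => A i i) i j * (x j - μ j)) := by
      rw [hT_def]
      simp only [dotProduct, Matrix.mulVec, Pi.sub_apply]
    have key : ∑ i, ∑ j, cc i j * ((x i - μ i) * ((x j - μ j) * q x)) =
        q x * ((1 / 2) * S x - (1 / 2) * T x) := by
      rw [hS_x, hT_x]
      simp only [Finset.mul_sum, mul_sub, ← Finset.sum_sub_distrib]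
      refine Finset.sum_congr rfl fun i _ => Finset.sum_congr rfl fun j _ => ?_
      rw [hcc_def]
      ring
    rw [key]
    ring
  rw [expand]
  have I1 : Integrable (fun x : Fin d → ℝ => C * q x) := q_int.const_mul C
  have I2 : Integrable (fun x : Fin d → ℝ =>
      ∑ i, ∑ j, cc i j * ((x i - μ i) * ((x j - μ j) * q x))) :=
    integrable_finset_sum _ fun i _ => integrable_finset_sum _ fun j _ =>
      (mom_int i j).const_mul (cc i j)
  rw [integral_add I1 I2, integral_const_mul, q_intone, mul_one]
  rw [integral_finset_sum _ fun i _ => integrable_finset_sum _ fun j _ =>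
    (mom_int i j).const_mul (cc i j)]
  have hz : ∑ i, ∫ x : Fin d → ℝ,
      (∑ j, cc i j * ((x i - μ i) * ((x j - μ j) * q x))) = 0 := by
    refine Finset.sum_eq_zero fun i _ => ?_
    rw [integral_finset_sum _ fun j _ => (mom_int i j).const_mul (cc i j)]
    refine Finset.sum_eq_zero fun j _ => ?_
    rw [integral_const_mul]
    by_cases hij : i = j
    · subst hij
      have : cc i i = 0 := by
        rw [hcc_def]
        simp [Matrix.diagonal_apply_eq]
      rw [this, zero_mul]
    · rw [mom_zero i j hij, mul_zero]
  rw [hz, add_zero, hC_def, hr_def]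

end Main

theorem stmt16 (d : ℕ) (μ : Fin d → ℝ) (A : Matrix (Fin d) (Fin d) ℝ) (hA : A.PosDef)
    (m M : ℝ) (hm : 0 < m)
    (heig : ∀ i, m ≤ hA.1.eigenvalues i) (hM : ∀ i, A i i ≤ M) :
    A⁻¹.det * (Matrix.diagonal fun i => A i i).det ≤ (M / m) ^ d ∧
    klDiv (gaussMeasure μ (Matrix.diagonal fun i => (A i i)⁻¹)) (gaussMeasure μ A⁻¹)
      ≤ ((d : ℝ) / 2) * Real.log (M / m) := by
  have ha : ∀ i, 0 < A i i := diag_pos hA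
  have hdetA : A.det = ∏ i, hA.1.eigenvalues i := by
    simpa using hA.1.det_eq_prod_eigenvalues
  have hdet_ge : m ^ d ≤ A.det := by
    rw [hdetA]
    calc m ^ d = ∏ _i : Fin d, m := by
          rw [Finset.prod_const, Finset.card_univ, Fintype.card_fin]
      _ ≤ ∏ i, hA.1.eigenvalues i :=
          Finset.prod_le_prod (fun i _ => hm.le) (fun i _ => heig i)
  have hdetApos : 0 < A.det := hA.det_pos
  have hdetAinv : A⁻¹.det = A.det⁻¹ := by
    rw [Matrix.det_nonsing_inv, Ring.inverse_eq_inv]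
  have hprod_le : ∏ i, A i i ≤ M ^ d := by
    calc ∏ i, A i i ≤ ∏ _i : Fin d, M :=
          Finset.prod_le_prod (fun i _ => (ha i).le) (fun i _ => hM i)
      _ = M ^ d := by rw [Finset.prod_const, Finset.card_univ, Fintype.card_fin]
  have hprodpos : 0 < ∏ i, A i i := Finset.prod_pos fun i _ => ha i
  have part1 : A⁻¹.det * ∏ i, A i i ≤ (M / m) ^ d := by
    have h1 : A⁻¹.det ≤ (m ^ d)⁻¹ := by
      rw [hdetAinv]
      exact inv_anti₀ (pow_pos hm d) hdet_ge
    have h2 : A⁻¹.det * ∏ i, A i i ≤ (m ^ d)⁻¹ * M ^ d := by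
      refine mul_le_mul h1 hprod_le hprodpos.le ?_
      positivity
    calc A⁻¹.det * ∏ i, A i i ≤ (m ^ d)⁻¹ * M ^ d := h2
      _ = (M / m) ^ d := by rw [div_pow, inv_mul_eq_div]
  constructor
  · rw [Matrix.det_diagonal]
    exact part1
  · rw [klDiv_gauss_eq μ A hA]
    rcases Nat.eq_zero_or_pos d with hd | hd
    · subst hd
      simp [Matrix.det_fin_zero]
    · have i0 : Fin d := ⟨0, hd⟩
      have hMpos : 0 < M := lt_of_lt_of_le (ha i0) (hM i0)
      have hMm : 0 < M / m := div_pos hMpos hm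
      have hrpos : 0 < A⁻¹.det * ∏ i, A i i := by
        rw [hdetAinv]
        exact mul_pos (inv_pos.2 hdetApos) hprodpos
      have hle : Real.log (A⁻¹.det * ∏ i, A i i) ≤ Real.log ((M / m) ^ d) :=
        Real.log_le_log hrpos part1
      rw [Real.log_pow] at hle
      calc (1 / 2) * Real.log (A⁻¹.det * ∏ i, A i i)
          ≤ (1 / 2) * (d * Real.log (M / m)) := by linarith
        _ = ((d : ℝ) / 2) * Real.log (M / m) := by ring
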